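/- Fix d > 1 and 0 < λ < ∞, and let f_λ denote the unique fixed point of the truncated cavity operator T, extended to ℝ by f_λ(x) = 1 for x ≤ -λ and f_λ(x) = 0 for x > λ. Then f_λ(0) ≥ e^{-1}. -/

import Mathlib

open MeasureTheory Set

/-- The truncated cavity operator `T`. -/
noncomputable def T (d lam : ℝ) (f : ℝ → ℝ) : ℝ → ℝ :=
  fun x => Real.exp (-(d * ∫ y in (-x)..lam, (x + y) ^ (d - 1) * f y))

/-- `f` is the fixed point of the truncated cavity operator on `[-λ, λ]`
(non-increasing and `[0,1]`-valued there), extended to `ℝ` by `1` on `(-∞, -λ]`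
and `0` on `(λ, ∞)`. -/
def ExtFixedPoint (d lam : ℝ) (f : ℝ → ℝ) : Prop :=
  AntitoneOn f (Icc (-lam) lam) ∧
  (∀ x ∈ Icc (-lam) lam, f x ∈ Icc (0 : ℝ) 1) ∧
  (∀ x ≤ -lam, f x = 1) ∧ (∀ x > lam, f x = 0) ∧
  (∀ x ∈ Icc (-lam) lam, T d lam f x = f x)

/-- `f_λ(0) ≥ e⁻¹`. -/
theorem fixedPoint_at_zero_ge (d lam : ℝ) (hd : 1 < d) (hlam : 0 < lam)
    (flam : ℝ → ℝ) (hflam : ExtFixedPoint d lam flam) :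
    Real.exp (-1) ≤ flam 0 := by
  obtain ⟨hanti, hmem, hone, hzero, hfix⟩ := hflam
  have hd0 : (0:ℝ) < d := by linarith
  have hd1 : (0:ℝ) ≤ d - 1 := by linarith
  -- global bounds
  have hbd : ∀ x, flam x ∈ Icc (0:ℝ) 1 := by
    intro x
    rcases le_or_gt x (-lam) with h | h
    · rw [hone x h]; exact ⟨zero_le_one, le_rfl⟩
    rcases le_or_gt x lam with h2 | h2
    · exact hmem x ⟨h.le, h2⟩
    · rw [hzero x h2]; exact ⟨le_rfl, zero_le_one⟩
  -- global antitonicity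
  have hA : Antitone flam := by
    intro x y hxy
    rcases le_or_gt x (-lam) with hx | hx
    · rw [hone x hx]; exact (hbd y).2
    rcases le_or_gt y lam with hy | hy
    · exact hanti ⟨hx.le, hxy.trans hy⟩ ⟨le_trans hx.le hxy, hy⟩ hxy
    · rw [hzero y hy]; exact (hbd x).1
  -- continuity of the kernel
  have hcont : ∀ c : ℝ, Continuous (fun y : ℝ => (c + y) ^ (d-1)) := fun c =>
    (Real.continuous_rpow_const hd1).comp (continuous_const.add continuous_id)
  -- integrability
  have hInt : ∀ c p q : ℝ, IntervalIntegrable (fun y => (c + y) ^ (d-1) * flam y) volume p q := by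
    intro c p q
    rw [intervalIntegrable_iff]
    have h1 : IntegrableOn (fun y : ℝ => (c + y) ^ (d-1)) (Set.uIoc p q) volume :=
      intervalIntegrable_iff.mp ((hcont c).intervalIntegrable p q)
    have h2 : IntegrableOn (fun y => flam y * (c + y) ^ (d-1)) (Set.uIoc p q) volume :=
      h1.bdd_mul hA.measurable.aestronglyMeasurable.restrict
        (c := 1) (Filter.Eventually.of_forall fun x => by
          rw [Real.norm_eq_abs, abs_le]
          exact ⟨by linarith [(hbd x).1], (hbd x).2⟩)
    exact h2.congr_fun (fun y _ => mul_comm _ _) measurableSet_uIoc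
  have hInt0 : ∀ p q : ℝ, IntervalIntegrable (fun y => y ^ (d-1) * flam y) volume p q := by
    intro p q
    simpa using hInt 0 p q
  -- fixed point at 0
  have h0mem : (0:ℝ) ∈ Icc (-lam) lam := ⟨by linarith, hlam.le⟩
  have ha : flam 0 = Real.exp (-(d * ∫ y in (0:ℝ)..lam, y ^ (d-1) * flam y)) := by
    have h := (hfix 0 h0mem).symm
    simp only [T, neg_zero, zero_add] at h
    exact h
  have ha_pos : 0 < flam 0 := ha ▸ Real.exp_pos _
  -- key pointwise bound
  have key : ∀ t ∈ Icc (0:ℝ) lam,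
      flam t ≤ flam 0 * Real.exp (-(flam 0 * t ^ d)) := by
    intro t ht
    obtain ⟨ht0, htl⟩ := ht
    have htmem : t ∈ Icc (-lam) lam := ⟨by linarith, htl⟩
    have hft : flam t = Real.exp (-(d * ∫ y in (-t)..lam, (t + y) ^ (d-1) * flam y)) := by
      have h := (hfix t htmem).symm
      simp only [T] at h
      exact h
    have hsplit : (∫ y in (-t)..lam, (t + y) ^ (d-1) * flam y)
        = (∫ y in (-t)..(0:ℝ), (t + y) ^ (d-1) * flam y)
          + ∫ y in (0:ℝ)..lam, (t + y) ^ (d-1) * flam y :=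
      (intervalIntegral.integral_add_adjacent_intervals (hInt t _ _) (hInt t _ _)).symm
    -- piece 1
    have hcomp : (∫ y in (-t)..(0:ℝ), (t + y) ^ (d-1)) = t ^ d / d := by
      have h1 : (∫ y in (-t)..(0:ℝ), (t + y) ^ (d-1)) = ∫ y in (0:ℝ)..t, y ^ (d-1) := by
        have h2 := intervalIntegral.integral_comp_add_right (a := -t) (b := 0)
          (fun y => y ^ (d-1)) t
        simpa [add_comm] using h2
      rw [h1, integral_rpow (Or.inl (by linarith : (-1:ℝ) < d - 1))]
      have hd' : d - 1 + 1 = d := by ring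
      rw [hd', Real.zero_rpow (ne_of_gt hd0)]
      ring
    have hp1 : flam 0 * t ^ d / d ≤ ∫ y in (-t)..(0:ℝ), (t + y) ^ (d-1) * flam y := by
      have hmono : (∫ y in (-t)..(0:ℝ), (t + y) ^ (d-1) * flam 0)
          ≤ ∫ y in (-t)..(0:ℝ), (t + y) ^ (d-1) * flam y := by
        apply intervalIntegral.integral_mono_on (by linarith)
          (((hcont t).mul continuous_const).intervalIntegrable _ _) (hInt t _ _)
        intro y hy
        exact mul_le_mul_of_nonneg_left (hA hy.2)
          (Real.rpow_nonneg (by linarith [hy.1]) _)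
      calc flam 0 * t ^ d / d
          = (∫ y in (-t)..(0:ℝ), (t + y) ^ (d-1) * flam 0) := by
            rw [intervalIntegral.integral_mul_const, hcomp]; ring
        _ ≤ _ := hmono
    -- piece 2
    have hp2 : (∫ y in (0:ℝ)..lam, y ^ (d-1) * flam y)
        ≤ ∫ y in (0:ℝ)..lam, (t + y) ^ (d-1) * flam y := by
      apply intervalIntegral.integral_mono_on hlam.le (hInt0 _ _) (hInt t _ _)
      intro y hy
      exact mul_le_mul_of_nonneg_right
        (Real.rpow_le_rpow hy.1 (by linarith) hd1) (hbd y).1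
    have harg : flam 0 * t ^ d + d * (∫ y in (0:ℝ)..lam, y ^ (d-1) * flam y)
        ≤ d * ∫ y in (-t)..lam, (t + y) ^ (d-1) * flam y := by
      rw [hsplit, mul_add]
      have e1 := mul_le_mul_of_nonneg_left hp1 hd0.le
      have e2 := mul_le_mul_of_nonneg_left hp2 hd0.le
      have e3 : d * (flam 0 * t ^ d / d) = flam 0 * t ^ d := by field_simp
      linarith
    calc flam t = Real.exp (-(d * ∫ y in (-t)..lam, (t + y) ^ (d-1) * flam y)) := hft
      _ ≤ Real.exp (-(flam 0 * t ^ d + d * ∫ y in (0:ℝ)..lam, y ^ (d-1) * flam y)) :=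
          Real.exp_le_exp.mpr (by linarith)
      _ = flam 0 * Real.exp (-(flam 0 * t ^ d)) := by
          rw [ha, ← Real.exp_add]; congr 1; ring
  -- integrate the pointwise bound
  have hcont2 : Continuous (fun y : ℝ => y ^ (d-1) * (flam 0 * Real.exp (-(flam 0 * y ^ d)))) :=
    (Real.continuous_rpow_const hd1).mul
      (continuous_const.mul
        (Real.continuous_exp.comp ((continuous_const.mul (Real.continuous_rpow_const hd0.le)).neg)))
  have hIle : (∫ y in (0:ℝ)..lam, y ^ (d-1) * flam y)
      ≤ ∫ y in (0:ℝ)..lam, y ^ (d-1) * (flam 0 * Real.exp (-(flam 0 * y ^ d))) := by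
    apply intervalIntegral.integral_mono_on hlam.le (hInt0 _ _) (hcont2.intervalIntegrable _ _)
    intro y hy
    exact mul_le_mul_of_nonneg_left (key y hy) (Real.rpow_nonneg hy.1 _)
  -- compute the right integral via FTC
  have hderiv : ∀ y ∈ uIcc (0:ℝ) lam,
      HasDerivAt (fun y : ℝ => -Real.exp (-(flam 0 * y ^ d)) / d)
        (y ^ (d-1) * (flam 0 * Real.exp (-(flam 0 * y ^ d)))) y := by
    intro y _
    have h1 : HasDerivAt (fun y : ℝ => y ^ d) (d * y ^ (d-1)) y :=
      Real.hasDerivAt_rpow_const (Or.inr hd.le)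
    have h2 : HasDerivAt (fun y : ℝ => -(flam 0 * y ^ d)) (-(flam 0 * (d * y ^ (d-1)))) y :=
      (h1.const_mul (flam 0)).neg
    have h3 := (Real.hasDerivAt_exp (-(flam 0 * y ^ d))).comp y h2
    have h4 := h3.neg.div_const d
    refine h4.congr_deriv ?_
    rw [div_eq_iff hd0.ne']
    ring
  have hcalc : (∫ y in (0:ℝ)..lam, y ^ (d-1) * (flam 0 * Real.exp (-(flam 0 * y ^ d))))
      = (1 - Real.exp (-(flam 0 * lam ^ d))) / d := by
    rw [intervalIntegral.integral_eq_sub_of_hasDerivAt hderiv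
      (hcont2.intervalIntegrable _ _)]
    rw [Real.zero_rpow (ne_of_gt hd0)]
    simp
    ring
  -- conclude
  rw [ha]
  apply Real.exp_le_exp.mpr
  have hE : 0 < Real.exp (-(flam 0 * lam ^ d)) := Real.exp_pos _
  have h5 : d * (∫ y in (0:ℝ)..lam, y ^ (d-1) * flam y)
      ≤ d * ((1 - Real.exp (-(flam 0 * lam ^ d))) / d) := by
    rw [← hcalc]
    exact mul_le_mul_of_nonneg_left hIle hd0.le
  have h6 : d * ((1 - Real.exp (-(flam 0 * lam ^ d))) / d)
      = 1 - Real.exp (-(flam 0 * lam ^ d)) := by field_simp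
  linarith
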